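/- Let N ≥ 1, 1 ≤ p < ∞, let u ∈ L^p(ℝ^N) be nonnegative, let H ⊂ ℝ^N be a closed halfspace, and let ρ : ℝ^N → [0,∞) be a radial, radially nonincreasing integrable function. Then ∫_{ℝ^N} ∫_{ℝ^N} |u^H(x) − u^H(y)|^p ρ(x − y) dx dy ≤ ∫_{ℝ^N} ∫_{ℝ^N} |u(x) − u(y)|^p ρ(x − y) dx dy. -/

import Mathlib

open MeasureTheory Filter
open scoped ENNReal NNReal

/-- Reflection across the boundary hyperplane `{x : ⟪a,x⟫ = b}` of the closed
halfspace `H = {x : ⟪a,x⟫ ≤ b}` (for `‖a‖ = 1`). -/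
noncomputable def reflectH {N : ℕ} (a : EuclideanSpace ℝ (Fin N)) (b : ℝ)
    (x : EuclideanSpace ℝ (Fin N)) : EuclideanSpace ℝ (Fin N) :=
  x - (2 * ((inner ℝ a x : ℝ) - b)) • a

/-- Polarization (two-point rearrangement) of `u` with respect to the closed halfspace
`H = {x : ⟪a,x⟫ ≤ b}` (for `‖a‖ = 1`). -/
noncomputable def polarization {N : ℕ} (a : EuclideanSpace ℝ (Fin N)) (b : ℝ)
    (u : EuclideanSpace ℝ (Fin N) → ℝ) (x : EuclideanSpace ℝ (Fin N)) : ℝ :=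
  if (inner ℝ a x : ℝ) ≤ b then max (u x) (u (reflectH a b x))
  else min (u x) (u (reflectH a b x))

section Geometry

variable {N : ℕ} {a : EuclideanSpace ℝ (Fin N)} {b : ℝ}

lemma inner_reflectH (ha : ‖a‖ = 1) (x : EuclideanSpace ℝ (Fin N)) :
    (inner ℝ a (reflectH a b x) : ℝ) = 2 * b - inner ℝ a x := by
  have haa : (inner ℝ a a : ℝ) = 1 := by
    rw [real_inner_self_eq_norm_sq, ha]; norm_num
  simp only [reflectH, inner_sub_right, real_inner_smul_right, haa]
  ring

lemma reflectH_reflectH (ha : ‖a‖ = 1) (x : EuclideanSpace ℝ (Fin N)) :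
    reflectH a b (reflectH a b x) = x := by
  have h := inner_reflectH (b := b) ha x
  rw [reflectH, h, reflectH]
  module

/-- The linear part of `reflectH` as a linear isometry equivalence. -/
noncomputable def reflIso {N : ℕ} (a : EuclideanSpace ℝ (Fin N)) :
    EuclideanSpace ℝ (Fin N) ≃ₗᵢ[ℝ] EuclideanSpace ℝ (Fin N) :=
  Submodule.reflection (ℝ ∙ a)ᗮ

lemma reflectH_eq (ha : ‖a‖ = 1) (x : EuclideanSpace ℝ (Fin N)) :
    reflectH a b x = reflIso a x + (2 * b) • a := by
  rw [reflIso, Submodule.reflection_apply, Submodule.starProjection_orthogonal_val,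
    Submodule.starProjection_singleton]
  rw [ha]
  push_cast
  rw [reflectH]
  module

lemma measurePreserving_reflectH (ha : ‖a‖ = 1) :
    MeasurePreserving (reflectH a b) (volume : Measure (EuclideanSpace ℝ (Fin N))) volume := by
  have h1 := (reflIso (N := N) a).measurePreserving
  have h2 := measurePreserving_add_right (volume : Measure (EuclideanSpace ℝ (Fin N)))
    ((2 * b) • a)
  have := h2.comp h1
  have heq : reflectH a b = (fun x => x + (2 * b) • a) ∘ reflIso a := by
    funext x
    simp [Function.comp, reflectH_eq ha]
  rw [heq]; exact this

lemma norm_reflectH_sub_reflectH (ha : ‖a‖ = 1) (x y : EuclideanSpace ℝ (Fin N)) :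
    ‖reflectH a b x - reflectH a b y‖ = ‖x - y‖ := by
  rw [reflectH_eq ha, reflectH_eq ha]
  have : reflIso a x + (2 * b) • a - (reflIso a y + (2 * b) • a) = reflIso a (x - y) := by
    rw [map_sub]; abel
  rw [this, (reflIso a).norm_map]

lemma norm_sub_reflectH_sq (ha : ‖a‖ = 1) (x y : EuclideanSpace ℝ (Fin N)) :
    ‖x - reflectH a b y‖ ^ 2
      = ‖x - y‖ ^ 2 + 4 * ((inner ℝ a x : ℝ) - b) * ((inner ℝ a y : ℝ) - b) := by
  have hxy : x - reflectH a b y = (x - y) + (2 * ((inner ℝ a y : ℝ) - b)) • a := by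
    rw [reflectH]; abel
  rw [hxy, norm_add_sq_real, real_inner_smul_right, norm_smul]
  rw [inner_sub_left, real_inner_comm x a, real_inner_comm y a, ha]
  simp [Real.norm_eq_abs, mul_pow, sq_abs]
  ring

end Geometry

section Pointwise

variable {p : ℝ}

lemma convexOn_abs_rpow (hp : 1 ≤ p) : ConvexOn ℝ Set.univ (fun x : ℝ => |x| ^ p) := by
  have hp0 : 0 ≤ p := le_trans zero_le_one hp
  refine ⟨convex_univ, ?_⟩
  intro x _ y _ la mu hla hmu hs
  simp only [smul_eq_mul]
  calc |la * x + mu * y| ^ p ≤ (la * |x| + mu * |y|) ^ p := by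
        apply Real.rpow_le_rpow (abs_nonneg _) _ hp0
        calc |la * x + mu * y| ≤ |la * x| + |mu * y| := abs_add_le _ _
          _ = la * |x| + mu * |y| := by
              rw [abs_mul, abs_mul, abs_of_nonneg hla, abs_of_nonneg hmu]
    _ ≤ la * |x| ^ p + mu * |y| ^ p := by
        have := (convexOn_rpow hp).2 (Set.mem_Ici.2 (abs_nonneg x))
          (Set.mem_Ici.2 (abs_nonneg y)) hla hmu hs
        simpa using this

lemma convex_pair (hp : 1 ≤ p) {x1 x2 y1 y2 : ℝ} (h1 : y2 ≤ x1) (h2 : x1 ≤ y1)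
    (h3 : y2 ≤ x2) (h4 : x2 ≤ y1) (hsum : x1 + x2 = y1 + y2) :
    |x1| ^ p + |x2| ^ p ≤ |y1| ^ p + |y2| ^ p := by
  rcases eq_or_lt_of_le (le_trans h1 h2 : y2 ≤ y1) with heq | hlt
  · have hx1 : x1 = y1 := le_antisymm h2 (heq ▸ h1)
    have hx2 : x2 = y2 := le_antisymm (heq ▸ h4) h3
    rw [hx1, hx2]
  · have hd : (0:ℝ) < y1 - y2 := sub_pos.2 hlt
    set la := (x1 - y2) / (y1 - y2) with hla_def
    have hla0 : 0 ≤ la := div_nonneg (sub_nonneg.2 h1) hd.le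
    have hla1 : la ≤ 1 := (div_le_one hd).2 (by linarith)
    have hc := convexOn_abs_rpow hp
    have hmul : la * (y1 - y2) = x1 - y2 := div_mul_cancel₀ _ hd.ne'
    have e1 : la • y1 + (1 - la) • y2 = x1 := by
      simp only [smul_eq_mul]; linear_combination hmul
    have e2 : (1 - la) • y1 + la • y2 = x2 := by
      simp only [smul_eq_mul]; linear_combination -hsum - hmul
    have i1 : |(la • y1 + (1 - la) • y2 : ℝ)| ^ p ≤ la • |y1| ^ p + (1 - la) • |y2| ^ p :=
      hc.2 (Set.mem_univ y1) (Set.mem_univ y2) hla0 (by linarith) (by ring)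
    have i2 : |((1 - la) • y1 + la • y2 : ℝ)| ^ p ≤ (1 - la) • |y1| ^ p + la • |y2| ^ p :=
      hc.2 (Set.mem_univ y1) (Set.mem_univ y2) (by linarith) hla0 (by ring)
    rw [e1] at i1
    rw [e2] at i2
    simp only [smul_eq_mul] at i1 i2
    nlinarith [i1, i2]

lemma spread (hp : 1 ≤ p) {A B C D : ℝ} (hCA : C ≤ A) (hDB : D ≤ B) :
    |A - B| ^ p + |C - D| ^ p ≤ |A - D| ^ p + |C - B| ^ p :=
  convex_pair hp (by linarith) (by linarith) (by linarith) (by linarith) (by ring)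

lemma keylem (hp : 1 ≤ p) (s t v w r1 r2 : ℝ) (h2 : 0 ≤ r2) (h12 : r2 ≤ r1) :
    |max s t - max v w| ^ p * r1 + |max s t - min v w| ^ p * r2
      + |min s t - max v w| ^ p * r2 + |min s t - min v w| ^ p * r1
    ≤ |s - v| ^ p * r1 + |s - w| ^ p * r2 + |t - v| ^ p * r2 + |t - w| ^ p * r1 := by
  rcases le_total t s with hts | hts <;> rcases le_total w v with hwv | hwv
  · rw [max_eq_left hts, min_eq_right hts, max_eq_left hwv, min_eq_right hwv]
  · rw [max_eq_left hts, min_eq_right hts, max_eq_right hwv, min_eq_left hwv]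
    have := spread hp (A := s) (B := w) (C := t) (D := v) hts hwv
    nlinarith [this, Real.rpow_nonneg (abs_nonneg (s-w)) p, Real.rpow_nonneg (abs_nonneg (t-v)) p,
      Real.rpow_nonneg (abs_nonneg (s-v)) p, Real.rpow_nonneg (abs_nonneg (t-w)) p]
  · rw [max_eq_right hts, min_eq_left hts, max_eq_left hwv, min_eq_right hwv]
    have := spread hp (A := t) (B := v) (C := s) (D := w) hts hwv
    nlinarith [this, Real.rpow_nonneg (abs_nonneg (t-v)) p,
      Real.rpow_nonneg (abs_nonneg (s-w)) p, Real.rpow_nonneg (abs_nonneg (t-w)) p,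
      Real.rpow_nonneg (abs_nonneg (s-v)) p]
  · rw [max_eq_right hts, min_eq_left hts, max_eq_right hwv, min_eq_left hwv]
    have e1 : |t - w| = |w - t| := abs_sub_comm t w
    have e2 : |s - v| = |v - s| := abs_sub_comm s v
    have e3 : |t - v| = |v - t| := abs_sub_comm t v
    have e4 : |s - w| = |w - s| := abs_sub_comm s w
    rw [e1, e2, e3, e4]; linarith

end Pointwise

section Pol

variable {N : ℕ} {a : EuclideanSpace ℝ (Fin N)} {b : ℝ} {u : EuclideanSpace ℝ (Fin N) → ℝ}
  {x : EuclideanSpace ℝ (Fin N)}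

lemma pol_le (hx : (inner ℝ a x : ℝ) ≤ b) :
    polarization a b u x = max (u x) (u (reflectH a b x)) := if_pos hx

lemma pol_gt (hx : b < (inner ℝ a x : ℝ)) :
    polarization a b u x = min (u x) (u (reflectH a b x)) := if_neg (not_le.2 hx)

lemma pol_reflect_le (ha : ‖a‖ = 1) (hx : (inner ℝ a x : ℝ) ≤ b) :
    polarization a b u (reflectH a b x) = min (u x) (u (reflectH a b x)) := by
  rcases eq_or_lt_of_le hx with heq | hlt
  · have hfix : reflectH a b x = x := by
      rw [reflectH, heq]; simp
    rw [hfix, polarization, if_pos hx, hfix]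
    simp
  · have h1 : ¬ ((inner ℝ a (reflectH a b x) : ℝ) ≤ b) := by
      rw [inner_reflectH ha]; linarith
    rw [polarization, if_neg h1, reflectH_reflectH ha, min_comm]

lemma pol_reflect_gt (ha : ‖a‖ = 1) (hx : b < (inner ℝ a x : ℝ)) :
    polarization a b u (reflectH a b x) = max (u x) (u (reflectH a b x)) := by
  have h1 : (inner ℝ a (reflectH a b x) : ℝ) ≤ b := by
    rw [inner_reflectH ha]; linarith
  rw [polarization, if_pos h1, reflectH_reflectH ha, max_comm]

lemma master {p : ℝ} (hp : 1 ≤ p) (ha : ‖a‖ = 1)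
    {r : EuclideanSpace ℝ (Fin N) → ℝ} (hr0 : ∀ z, 0 ≤ r z)
    {W : ℝ → ℝ} (hW : AntitoneOn W (Set.Ici 0)) (hrW : ∀ z, r z = W ‖z‖)
    (x y : EuclideanSpace ℝ (Fin N)) :
    |polarization a b u x - polarization a b u y| ^ p * r (x - y)
      + |polarization a b u x - polarization a b u (reflectH a b y)| ^ p * r (x - reflectH a b y)
      + |polarization a b u (reflectH a b x) - polarization a b u y| ^ p * r (reflectH a b x - y)
      + |polarization a b u (reflectH a b x) - polarization a b u (reflectH a b y)| ^ p
          * r (reflectH a b x - reflectH a b y)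
    ≤ |u x - u y| ^ p * r (x - y) + |u x - u (reflectH a b y)| ^ p * r (x - reflectH a b y)
      + |u (reflectH a b x) - u y| ^ p * r (reflectH a b x - y)
      + |u (reflectH a b x) - u (reflectH a b y)| ^ p * r (reflectH a b x - reflectH a b y) := by
  have er1 : r (reflectH a b x - reflectH a b y) = r (x - y) := by
    rw [hrW, hrW, norm_reflectH_sub_reflectH ha]
  have er2 : r (reflectH a b x - y) = r (x - reflectH a b y) := by
    rw [hrW, hrW]
    have h := norm_reflectH_sub_reflectH (b := b) ha (reflectH a b x) y
    rw [reflectH_reflectH ha] at h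
    rw [← h]
  rw [er1, er2]
  have hsq := norm_sub_reflectH_sq (b := b) ha x y
  have hn1 : (0:ℝ) ≤ ‖x - y‖ := norm_nonneg _
  have hn2 : (0:ℝ) ≤ ‖x - reflectH a b y‖ := norm_nonneg _
  have hWmono : ∀ {c d : ℝ}, 0 ≤ c → c ≤ d → W d ≤ W c := fun hc hcd =>
    hW (Set.mem_Ici.2 hc) (Set.mem_Ici.2 (le_trans hc hcd)) hcd
  rcases le_or_gt (inner ℝ a x : ℝ) b with hx | hx <;> rcases le_or_gt (inner ℝ a y : ℝ) b with hy | hy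
  · have hle : ‖x - y‖ ≤ ‖x - reflectH a b y‖ := by nlinarith
    have hr12 : r (x - reflectH a b y) ≤ r (x - y) := by
      rw [hrW, hrW]; exact hWmono hn1 hle
    rw [pol_le hx, pol_le hy, pol_reflect_le ha hx, pol_reflect_le ha hy]
    have := keylem hp (u x) (u (reflectH a b x)) (u y) (u (reflectH a b y))
      (r (x - y)) (r (x - reflectH a b y)) (hr0 _) hr12
    linarith
  · have hle : ‖x - reflectH a b y‖ ≤ ‖x - y‖ := by nlinarith
    have hr12 : r (x - y) ≤ r (x - reflectH a b y) := by
      rw [hrW, hrW]; exact hWmono hn2 hle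
    rw [pol_le hx, pol_gt hy, pol_reflect_le ha hx, pol_reflect_gt ha hy]
    have h := keylem hp (u x) (u (reflectH a b x)) (u (reflectH a b y)) (u y)
      (r (x - reflectH a b y)) (r (x - y)) (hr0 _) hr12
    rw [max_comm (u (reflectH a b y)) (u y), min_comm (u (reflectH a b y)) (u y)] at h
    linarith
  · have hle : ‖x - reflectH a b y‖ ≤ ‖x - y‖ := by nlinarith
    have hr12 : r (x - y) ≤ r (x - reflectH a b y) := by
      rw [hrW, hrW]; exact hWmono hn2 hle
    rw [pol_gt hx, pol_le hy, pol_reflect_gt ha hx, pol_reflect_le ha hy]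
    have h := keylem hp (u (reflectH a b x)) (u x) (u y) (u (reflectH a b y))
      (r (x - reflectH a b y)) (r (x - y)) (hr0 _) hr12
    rw [max_comm (u (reflectH a b x)) (u x), min_comm (u (reflectH a b x)) (u x)] at h
    linarith
  · have hle : ‖x - y‖ ≤ ‖x - reflectH a b y‖ := by nlinarith
    have hr12 : r (x - reflectH a b y) ≤ r (x - y) := by
      rw [hrW, hrW]; exact hWmono hn1 hle
    rw [pol_gt hx, pol_gt hy, pol_reflect_gt ha hx, pol_reflect_gt ha hy]
    have h := keylem hp (u (reflectH a b x)) (u x) (u (reflectH a b y)) (u y)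
      (r (x - y)) (r (x - reflectH a b y)) (hr0 _) hr12
    rw [max_comm (u (reflectH a b x)) (u x), min_comm (u (reflectH a b x)) (u x),
      max_comm (u (reflectH a b y)) (u y), min_comm (u (reflectH a b y)) (u y)] at h
    linarith

end Pol

section Transfer

/-- Generic change of variables for `lintegral` along a measure preserving map. -/
lemma lint_comp_mp {α : Type*} [MeasurableSpace α] {μ : Measure α} {T : α → α}
    (hT : MeasurePreserving T μ μ) {f : α → ℝ≥0∞} (hf : AEMeasurable f μ) :
    ∫⁻ x, f (T x) ∂μ = ∫⁻ x, f x ∂μ := by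
  have := lintegral_map' (by rwa [hT.map_eq] : AEMeasurable f (Measure.map T μ))
    hT.measurable.aemeasurable
  rw [hT.map_eq] at this
  exact this.symm

/-- Iterated Bochner integral of a nonnegative function equals `toReal` of
the product `lintegral`. -/
lemma iterated_eq_toReal {α β : Type*} [MeasurableSpace α] [MeasurableSpace β]
    {μ : Measure α} {ν : Measure β} [SigmaFinite μ] [SigmaFinite ν]
    {f : α × β → ℝ} (hm : AEMeasurable f (μ.prod ν)) (h0 : ∀ z, 0 ≤ f z)
    (hfin : ∫⁻ z, ENNReal.ofReal (f z) ∂(μ.prod ν) ≠ ⊤) :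
    ∫ x, ∫ y, f (x, y) ∂ν ∂μ = (∫⁻ z, ENNReal.ofReal (f z) ∂(μ.prod ν)).toReal := by
  set f' := hm.mk f with hf'def
  have hff' : f =ᵐ[μ.prod ν] f' := hm.ae_eq_mk
  have hf'm : Measurable f' := hm.measurable_mk
  have hsec : ∀ᵐ x ∂μ, (fun y => f (x, y)) =ᵐ[ν] fun y => f' (x, y) :=
    Measure.ae_ae_of_ae_prod hff'
  have hg'm : Measurable fun z => ENNReal.ofReal (f' z) := ENNReal.measurable_ofReal.comp hf'm
  have hIin : Measurable fun x => ∫⁻ y, ENNReal.ofReal (f' (x, y)) ∂ν :=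
    Measurable.lintegral_prod_right' hg'm
  have hprod_eq : ∫⁻ z, ENNReal.ofReal (f' z) ∂(μ.prod ν)
      = ∫⁻ z, ENNReal.ofReal (f z) ∂(μ.prod ν) := by
    apply lintegral_congr_ae
    filter_upwards [hff'] with z hz
    rw [hz]
  have hiter : ∫⁻ x, ∫⁻ y, ENNReal.ofReal (f' (x, y)) ∂ν ∂μ
      = ∫⁻ z, ENNReal.ofReal (f z) ∂(μ.prod ν) := by
    rw [← MeasureTheory.lintegral_prod _ hg'm.aemeasurable, hprod_eq]
  have hfin' : ∫⁻ x, (∫⁻ y, ENNReal.ofReal (f' (x, y)) ∂ν) ∂μ ≠ ⊤ := by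
    rw [hiter]; exact hfin
  have hae_lt : ∀ᵐ x ∂μ, ∫⁻ y, ENNReal.ofReal (f' (x, y)) ∂ν < ⊤ := ae_lt_top hIin hfin'
  have hstep1 : ∀ᵐ x ∂μ, ∫ y, f (x, y) ∂ν = (∫⁻ y, ENNReal.ofReal (f' (x, y)) ∂ν).toReal := by
    filter_upwards [hsec] with x hx
    rw [integral_congr_ae hx]
    apply integral_eq_lintegral_of_nonneg_ae
    · filter_upwards [hx] with y hy
      rw [← hy]; exact h0 _
    · exact (hf'm.comp measurable_prodMk_left).aestronglyMeasurable
  calc ∫ x, ∫ y, f (x, y) ∂ν ∂μ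
      = ∫ x, (∫⁻ y, ENNReal.ofReal (f' (x, y)) ∂ν).toReal ∂μ := integral_congr_ae hstep1
    _ = (∫⁻ x, ENNReal.ofReal ((∫⁻ y, ENNReal.ofReal (f' (x, y)) ∂ν).toReal) ∂μ).toReal := by
        apply integral_eq_lintegral_of_nonneg_ae
        · exact Eventually.of_forall fun x => ENNReal.toReal_nonneg
        · exact hIin.ennreal_toReal.aestronglyMeasurable
    _ = (∫⁻ x, ∫⁻ y, ENNReal.ofReal (f' (x, y)) ∂ν ∂μ).toReal := by
        congr 1
        apply lintegral_congr_ae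
        filter_upwards [hae_lt] with x hx
        rw [ENNReal.ofReal_toReal hx.ne]
    _ = (∫⁻ z, ENNReal.ofReal (f z) ∂(μ.prod ν)).toReal := by rw [hiter]

end Transfer

/-- Local abbreviation for `ℝ^N`. -/
abbrev EuclSp (N : ℕ) : Type := EuclideanSpace ℝ (Fin N)

/-- For nonnegative `u ∈ L^p(ℝ^N)`, any closed halfspace
`H = {x : ⟪a,x⟫ ≤ b}`, and any radial, radially nonincreasing, nonnegative integrable `r`,
one has `∬ |u^H(x) − u^H(y)|^p r(x−y) dx dy ≤ ∬ |u(x) − u(y)|^p r(x−y) dx dy`. -/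
theorem statement11 {N : ℕ} (hN : 1 ≤ N) (p : ℝ) (hp : 1 ≤ p)
    (u : EuclideanSpace ℝ (Fin N) → ℝ)
    (hu : MemLp u (ENNReal.ofReal p) volume) (hu0 : ∀ x, 0 ≤ u x)
    (a : EuclideanSpace ℝ (Fin N)) (b : ℝ) (ha : ‖a‖ = 1)
    (r : EuclideanSpace ℝ (Fin N) → ℝ) (hr : Integrable r volume) (hr0 : ∀ x, 0 ≤ r x)
    (W : ℝ → ℝ) (hW : AntitoneOn W (Set.Ici 0)) (hrW : ∀ x, r x = W ‖x‖) :
    ∫ x, ∫ y, |polarization a b u x - polarization a b u y| ^ p * r (x - y) ≤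
      ∫ x, ∫ y, |u x - u y| ^ p * r (x - y) := by
  classical
  have hp0 : (0:ℝ) ≤ p := le_trans zero_le_one hp
  let μ : Measure (EuclSp N) := volume
  let π : Measure (EuclSp N × EuclSp N) := μ.prod μ
  set σ : (EuclSp N) → (EuclSp N) := reflectH a b with hσ
  set P : (EuclSp N) → ℝ := polarization a b u with hP
  have hmp : MeasurePreserving σ μ μ := measurePreserving_reflectH ha
  have hum : AEMeasurable u μ := hu.aestronglyMeasurable.aemeasurable
  have hrm : AEMeasurable r μ := hr.aestronglyMeasurable.aemeasurable
  -- measurability of the polarization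
  have hPm : AEMeasurable P μ := by
    set u0 := hum.mk u with hu0def
    have hu0eq : u =ᵐ[μ] u0 := hum.ae_eq_mk
    have hu0m : Measurable u0 := hum.measurable_mk
    have hσmeas : Measurable σ := hmp.measurable
    have hsetm : MeasurableSet {x : (EuclSp N) | (inner ℝ a x : ℝ) ≤ b} := by
      have : Continuous fun x : (EuclSp N) => (inner ℝ a x : ℝ) :=
        Continuous.inner continuous_const continuous_id
      exact measurableSet_le this.measurable measurable_const
    have hP0m : Measurable (polarization a b u0) := by
      apply Measurable.ite hsetm
      · exact hu0m.max (hu0m.comp hσmeas)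
      · exact hu0m.min (hu0m.comp hσmeas)
    have hcomp : (fun x => u (σ x)) =ᵐ[μ] fun x => u0 (σ x) :=
      hmp.quasiMeasurePreserving.ae_eq_comp hu0eq
    refine ⟨polarization a b u0, hP0m, ?_⟩
    filter_upwards [hu0eq, hcomp] with x h1 h2
    simp only [hP, polarization]
    rw [h1, h2]
  -- the product-space integrands
  set fP : (EuclSp N) × (EuclSp N) → ℝ := fun z => |P z.1 - P z.2| ^ p * r (z.1 - z.2) with hfPdef
  set fu : (EuclSp N) × (EuclSp N) → ℝ := fun z => |u z.1 - u z.2| ^ p * r (z.1 - z.2) with hfudef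
  have hfP0 : ∀ z, 0 ≤ fP z := fun z =>
    mul_nonneg (Real.rpow_nonneg (abs_nonneg _) p) (hr0 _)
  have hfu0 : ∀ z, 0 ≤ fu z := fun z =>
    mul_nonneg (Real.rpow_nonneg (abs_nonneg _) p) (hr0 _)
  have hqfst : Measure.QuasiMeasurePreserving (Prod.fst : (EuclSp N) × (EuclSp N) → EuclSp N) π μ :=
    MeasureTheory.Measure.quasiMeasurePreserving_fst
  have hqsnd : Measure.QuasiMeasurePreserving (Prod.snd : (EuclSp N) × (EuclSp N) → EuclSp N) π μ :=
    MeasureTheory.Measure.quasiMeasurePreserving_snd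
  have hqsub : Measure.QuasiMeasurePreserving (fun z : (EuclSp N) × (EuclSp N) => z.1 - z.2) π μ :=
    hqfst.comp (measurePreserving_sub_prod μ μ).quasiMeasurePreserving
  have hrpowm : Measurable fun x : ℝ => x ^ p := (Real.continuous_rpow_const hp0).measurable
  have hfm : ∀ {f : (EuclSp N) → ℝ}, AEMeasurable f μ → AEMeasurable
      (fun z : (EuclSp N) × (EuclSp N) => |f z.1 - f z.2| ^ p * r (z.1 - z.2)) π := by
    intro f hf
    have h1 : AEMeasurable (fun z : (EuclSp N) × (EuclSp N) => f z.1) π := hf.comp_quasiMeasurePreserving hqfst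
    have h2 : AEMeasurable (fun z : (EuclSp N) × (EuclSp N) => f z.2) π := hf.comp_quasiMeasurePreserving hqsnd
    have h3 : AEMeasurable (fun z : (EuclSp N) × (EuclSp N) => r (z.1 - z.2)) π :=
      hrm.comp_quasiMeasurePreserving hqsub
    have habs : Measurable fun x : ℝ => |x| ^ p := hrpowm.comp continuous_abs.measurable
    exact (habs.comp_aemeasurable (h1.sub h2)).mul h3
  have hfPm : AEMeasurable fP π := hfm hPm
  have hfum : AEMeasurable fu π := hfm hum
  set gP : (EuclSp N) × (EuclSp N) → ℝ≥0∞ := fun z => ENNReal.ofReal (fP z) with hgPdef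
  set gu : (EuclSp N) × (EuclSp N) → ℝ≥0∞ := fun z => ENNReal.ofReal (fu z) with hgudef
  have hgPm : AEMeasurable gP π := ENNReal.measurable_ofReal.comp_aemeasurable hfPm
  have hgum : AEMeasurable gu π := ENNReal.measurable_ofReal.comp_aemeasurable hfum
  -- the three partial reflections of the product space
  set T1 : (EuclSp N) × (EuclSp N) → (EuclSp N) × (EuclSp N) := fun z => (z.1, σ z.2) with hT1def
  set T2 : (EuclSp N) × (EuclSp N) → (EuclSp N) × (EuclSp N) := fun z => (σ z.1, z.2) with hT2def
  set T3 : (EuclSp N) × (EuclSp N) → (EuclSp N) × (EuclSp N) := fun z => (σ z.1, σ z.2) with hT3def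
  have hT1 : MeasurePreserving T1 π π := (MeasurePreserving.id μ).prod hmp
  have hT2 : MeasurePreserving T2 π π := hmp.prod (MeasurePreserving.id μ)
  have hT3 : MeasurePreserving T3 π π := hmp.prod hmp
  -- key inequality for the lintegrals
  have hmain : ∫⁻ z, gP z ∂π ≤ ∫⁻ z, gu z ∂π := by
    have hsum : ∀ (g : (EuclSp N × EuclSp N) → ℝ≥0∞), AEMeasurable g π →
        ∫⁻ z, (g z + g (T1 z) + g (T2 z) + g (T3 z)) ∂π = 4 * ∫⁻ z, g z ∂π := by
      intro g hg
      have hg1 : AEMeasurable (fun z => g (T1 z)) π :=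
        hg.comp_quasiMeasurePreserving hT1.quasiMeasurePreserving
      have hg2 : AEMeasurable (fun z => g (T2 z)) π :=
        hg.comp_quasiMeasurePreserving hT2.quasiMeasurePreserving
      have hg3 : AEMeasurable (fun z => g (T3 z)) π :=
        hg.comp_quasiMeasurePreserving hT3.quasiMeasurePreserving
      rw [lintegral_add_right' _ hg3, lintegral_add_right' _ hg2, lintegral_add_right' _ hg1]
      rw [lint_comp_mp hT1 hg, lint_comp_mp hT2 hg, lint_comp_mp hT3 hg]
      ring
    have h4 : 4 * ∫⁻ z, gP z ∂π ≤ 4 * ∫⁻ z, gu z ∂π := by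
      rw [← hsum gP hgPm, ← hsum gu hgum]
      apply lintegral_mono
      intro z
      obtain ⟨x, y⟩ := z
      have hmaster := master (u := u) (a := a) (b := b) hp ha hr0 hW hrW x y
      have e : ∀ (f : (EuclSp N) → ℝ),
          ENNReal.ofReal (|f x - f y| ^ p * r (x - y))
            + ENNReal.ofReal (|f x - f (σ y)| ^ p * r (x - σ y))
            + ENNReal.ofReal (|f (σ x) - f y| ^ p * r (σ x - y))
            + ENNReal.ofReal (|f (σ x) - f (σ y)| ^ p * r (σ x - σ y))
          = ENNReal.ofReal (|f x - f y| ^ p * r (x - y)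
            + |f x - f (σ y)| ^ p * r (x - σ y)
            + |f (σ x) - f y| ^ p * r (σ x - y)
            + |f (σ x) - f (σ y)| ^ p * r (σ x - σ y)) := by
        intro f
        have nn : ∀ (z : (EuclSp N) × EuclSp N), 0 ≤ |f z.1 - f z.2| ^ p * r (z.1 - z.2) := fun z =>
          mul_nonneg (Real.rpow_nonneg (abs_nonneg _) p) (hr0 _)
        rw [ENNReal.ofReal_add (add_nonneg (add_nonneg (nn (x, y)) (nn (x, σ y)))
            (nn (σ x, y))) (nn (σ x, σ y)),
          ENNReal.ofReal_add (add_nonneg (nn (x, y)) (nn (x, σ y))) (nn (σ x, y)),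
          ENNReal.ofReal_add (nn (x, y)) (nn (x, σ y))]
      show gP (x, y) + gP (T1 (x, y)) + gP (T2 (x, y)) + gP (T3 (x, y))
        ≤ gu (x, y) + gu (T1 (x, y)) + gu (T2 (x, y)) + gu (T3 (x, y))
      simp only [hgPdef, hgudef, hfPdef, hfudef, hT1def, hT2def, hT3def]
      rw [e P, e u]
      exact ENNReal.ofReal_le_ofReal hmaster
    have h4' := h4
    rwa [ENNReal.mul_le_mul_iff_right (by norm_num) (by norm_num)] at h4'
  -- finiteness of the right-hand side
  have hufin : ∫⁻ x, ENNReal.ofReal (|u x| ^ p) ∂μ ≠ ⊤ := by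
    have hInt : Integrable (fun x => ‖u x‖ ^ (ENNReal.ofReal p).toReal) μ :=
      hu.integrable_norm_rpow (by simp [ENNReal.ofReal_eq_zero]; linarith) ENNReal.ofReal_ne_top
    rw [ENNReal.toReal_ofReal hp0] at hInt
    simp only [Real.norm_eq_abs] at hInt
    rw [lintegral_ofReal_ne_top_iff_integrable]
    · exact hInt
    · exact hInt.aestronglyMeasurable
    · exact Eventually.of_forall fun x => Real.rpow_nonneg (abs_nonneg _) p
  have hrfin : ∫⁻ x, ENNReal.ofReal (r x) ∂μ ≠ ⊤ := by
    rw [lintegral_ofReal_ne_top_iff_integrable hr.aestronglyMeasurable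
      (Eventually.of_forall hr0)]
    exact hr
  have hRfin : ∫⁻ z, gu z ∂π ≠ ⊤ := by
    -- pointwise bound
    have hbd : ∀ z : (EuclSp N) × (EuclSp N), gu z ≤
        (ENNReal.ofReal (2 ^ p) * ENNReal.ofReal (|u z.1| ^ p)
          + ENNReal.ofReal (2 ^ p) * ENNReal.ofReal (|u z.2| ^ p))
          * ENNReal.ofReal (r (z.1 - z.2)) := by
      intro z
      have habs : |u z.1 - u z.2| ^ p ≤ 2 ^ p * (|u z.1| ^ p + |u z.2| ^ p) := by
        have h1 : |u z.1 - u z.2| ≤ 2 * max |u z.1| |u z.2| := by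
          calc |u z.1 - u z.2| = |u z.1 + -(u z.2)| := by rw [sub_eq_add_neg]
            _ ≤ |u z.1| + |-(u z.2)| := abs_add_le _ _
            _ = |u z.1| + |u z.2| := by rw [abs_neg]
            _ ≤ 2 * max |u z.1| |u z.2| := by
                rcases le_total |u z.1| |u z.2| with h | h
                · rw [max_eq_right h]; linarith
                · rw [max_eq_left h]; linarith
        calc |u z.1 - u z.2| ^ p ≤ (2 * max |u z.1| |u z.2|) ^ p :=
              Real.rpow_le_rpow (abs_nonneg _) h1 hp0
          _ = 2 ^ p * max |u z.1| |u z.2| ^ p := by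
              rw [Real.mul_rpow (by norm_num) (le_max_of_le_left (abs_nonneg _))]
          _ ≤ 2 ^ p * (|u z.1| ^ p + |u z.2| ^ p) := by
              apply mul_le_mul_of_nonneg_left _ (Real.rpow_nonneg (by norm_num) p)
              rcases le_total |u z.1| |u z.2| with h | h
              · rw [max_eq_right h]
                have := Real.rpow_nonneg (abs_nonneg (u z.1)) p
                linarith
              · rw [max_eq_left h]
                have := Real.rpow_nonneg (abs_nonneg (u z.2)) p
                linarith
      calc gu z = ENNReal.ofReal (|u z.1 - u z.2| ^ p) * ENNReal.ofReal (r (z.1 - z.2)) := by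
            rw [hgudef]
            exact ENNReal.ofReal_mul (Real.rpow_nonneg (abs_nonneg _) p)
        _ ≤ (ENNReal.ofReal (2 ^ p) * ENNReal.ofReal (|u z.1| ^ p)
              + ENNReal.ofReal (2 ^ p) * ENNReal.ofReal (|u z.2| ^ p))
              * ENNReal.ofReal (r (z.1 - z.2)) := by
            apply mul_le_mul_left
            rw [← ENNReal.ofReal_mul (Real.rpow_nonneg (by norm_num) p),
              ← ENNReal.ofReal_mul (Real.rpow_nonneg (by norm_num) p),
              ← ENNReal.ofReal_add (by positivity) (by positivity)]
            apply ENNReal.ofReal_le_ofReal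
            rw [← mul_add]
            exact habs
    set c : ℝ≥0∞ := ENNReal.ofReal (2 ^ p) with hcdef
    set A : (EuclSp N) → ℝ≥0∞ := fun x => ENNReal.ofReal (|u x| ^ p) with hAdef
    set B : (EuclSp N) → ℝ≥0∞ := fun x => ENNReal.ofReal (r x) with hBdef
    have habsm : Measurable fun x : ℝ => |x| ^ p := hrpowm.comp continuous_abs.measurable
    have hAm : AEMeasurable A μ :=
      ENNReal.measurable_ofReal.comp_aemeasurable (habsm.comp_aemeasurable hum)
    have hBm : AEMeasurable B μ := ENNReal.measurable_ofReal.comp_aemeasurable hrm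
    have hm1 : AEMeasurable (fun z : EuclSp N × EuclSp N => (c * A z.1) * B (z.1 - z.2)) π :=
      ((hAm.comp_quasiMeasurePreserving hqfst).const_mul c).mul
        (hBm.comp_quasiMeasurePreserving hqsub)
    have hm2 : AEMeasurable (fun z : EuclSp N × EuclSp N => (c * A z.2) * B (z.1 - z.2)) π :=
      ((hAm.comp_quasiMeasurePreserving hqsnd).const_mul c).mul
        (hBm.comp_quasiMeasurePreserving hqsub)
    have hbound : ∫⁻ z, gu z ∂π ≤
        ∫⁻ z : EuclSp N × EuclSp N, (c * A z.1) * B (z.1 - z.2) ∂π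
          + ∫⁻ z : EuclSp N × EuclSp N, (c * A z.2) * B (z.1 - z.2) ∂π := by
      rw [← lintegral_add_left' hm1]
      apply lintegral_mono
      intro z
      calc gu z ≤ (c * A z.1 + c * A z.2) * B (z.1 - z.2) := hbd z
        _ = (c * A z.1) * B (z.1 - z.2) + (c * A z.2) * B (z.1 - z.2) := by ring
    have hcA_ne_top : ∀ x, c * A x ≠ ⊤ := fun x =>
      ENNReal.mul_ne_top ENNReal.ofReal_ne_top ENNReal.ofReal_ne_top
    have hAfin : ∫⁻ x, A x ∂μ ≠ ⊤ := hufin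
    have hBfin : ∫⁻ x, B x ∂μ ≠ ⊤ := hrfin
    have hIB1 : ∀ x : EuclSp N, ∫⁻ y, B (x - y) ∂μ = ∫⁻ w, B w ∂μ := fun x =>
      lint_comp_mp (Measure.measurePreserving_sub_left μ x) hBm
    have hIB2 : ∀ y : EuclSp N, ∫⁻ x, B (x - y) ∂μ = ∫⁻ w, B w ∂μ := fun y =>
      lint_comp_mp (measurePreserving_sub_right μ y) hBm
    have hcAfin : ∫⁻ x, c * A x ∂μ ≠ ⊤ := by
      rw [lintegral_const_mul' c A ENNReal.ofReal_ne_top]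
      exact ENNReal.mul_ne_top ENNReal.ofReal_ne_top hAfin
    have h1fin : ∫⁻ z : EuclSp N × EuclSp N, (c * A z.1) * B (z.1 - z.2) ∂π ≠ ⊤ := by
      rw [MeasureTheory.lintegral_prod _ hm1]
      have heq : ∀ x : EuclSp N, ∫⁻ y, (c * A x) * B (x - y) ∂μ = (c * A x) * ∫⁻ w, B w ∂μ := by
        intro x
        rw [lintegral_const_mul' _ _ (hcA_ne_top x), hIB1 x]
      rw [lintegral_congr heq, lintegral_mul_const' _ _ hBfin]
      exact ENNReal.mul_ne_top hcAfin hBfin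
    have h2fin : ∫⁻ z : EuclSp N × EuclSp N, (c * A z.2) * B (z.1 - z.2) ∂π ≠ ⊤ := by
      rw [MeasureTheory.lintegral_prod_symm _ hm2]
      have heq : ∀ y : EuclSp N, ∫⁻ x, (c * A y) * B (x - y) ∂μ = (c * A y) * ∫⁻ w, B w ∂μ := by
        intro y
        rw [lintegral_const_mul' _ _ (hcA_ne_top y), hIB2 y]
      rw [lintegral_congr heq, lintegral_mul_const' _ _ hBfin]
      exact ENNReal.mul_ne_top hcAfin hBfin
    exact ne_top_of_le_ne_top (ENNReal.add_ne_top.2 ⟨h1fin, h2fin⟩) hbound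
  -- transfer back to Bochner integrals
  have hLfin : ∫⁻ z, gP z ∂π ≠ ⊤ := ne_top_of_le_ne_top hRfin hmain
  have e1 : ∫ x, ∫ y, fP (x, y) ∂μ ∂μ = (∫⁻ z, gP z ∂π).toReal :=
    iterated_eq_toReal hfPm hfP0 hLfin
  have e2 : ∫ x, ∫ y, fu (x, y) ∂μ ∂μ = (∫⁻ z, gu z ∂π).toReal :=
    iterated_eq_toReal hfum hfu0 hRfin
  calc ∫ x, ∫ y, |polarization a b u x - polarization a b u y| ^ p * r (x - y) ∂μ ∂μ
      = (∫⁻ z, gP z ∂π).toReal := e1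
    _ ≤ (∫⁻ z, gu z ∂π).toReal := ENNReal.toReal_mono hRfin hmain
    _ = ∫ x, ∫ y, |u x - u y| ^ p * r (x - y) ∂μ ∂μ := e2.symm
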